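/- Let u ∈ (0,1/2), μ the measure with density 1/x on [0,1], and f : (0,1) → ℝ an increasing function in L¹(μ). Then ∫_{[u,1]} f dμ − ∫_{F⁻¹([u,1])} f dμ ≥ (f(1/(1+u)) − f(u))·log(1+u) > 0, where F is the Farey map, provided f is strictly increasing. -/

import Mathlib

open MeasureTheory

noncomputable def farey (x : ℝ) : ℝ := if x ≤ 1/2 then x / (1 - x) else (1 - x) / x

noncomputable def fareyMeasure : Measure ℝ :=
  (volume.restrict (Set.Icc (0:ℝ) 1)).withDensity (fun x => ENNReal.ofReal (1 / x))

lemma fm_null {s : Set ℝ} (hs : volume s = 0) : fareyMeasure s = 0 := by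
  have hac : fareyMeasure ≪ volume :=
    (withDensity_absolutelyContinuous _ _).trans Measure.restrict_le_self.absolutelyContinuous
  exact hac hs

lemma fm_Ioc {p q : ℝ} (hp : 0 < p) (hpq : p ≤ q) (hq : q ≤ 1) :
    fareyMeasure (Set.Ioc p q) = ENNReal.ofReal (Real.log q - Real.log p) := by
  have hsub : Set.Ioc p q ⊆ Set.Icc (0:ℝ) 1 := fun x hx =>
    ⟨le_of_lt (lt_of_lt_of_le hp (le_of_lt hx.1)), hx.2.trans hq⟩
  rw [fareyMeasure, withDensity_apply _ measurableSet_Ioc,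
      Measure.restrict_restrict measurableSet_Ioc, Set.inter_eq_left.mpr hsub]
  have hInt : IntegrableOn (fun x : ℝ => 1 / x) (Set.Ioc p q) := by
    have hc : ContinuousOn (fun x : ℝ => 1 / x) (Set.Icc p q) :=
      continuousOn_const.div continuousOn_id
        (fun x hx => ne_of_gt (lt_of_lt_of_le hp hx.1))
    exact (hc.integrableOn_Icc).mono_set Set.Ioc_subset_Icc_self
  have hnn : 0 ≤ᵐ[volume.restrict (Set.Ioc p q)] (fun x : ℝ => 1 / x) := by
    filter_upwards [ae_restrict_mem measurableSet_Ioc] with x hx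
    have : 0 < x := lt_of_lt_of_le hp (le_of_lt hx.1)
    positivity
  rw [← ofReal_integral_eq_lintegral_ofReal hInt hnn]
  congr 1
  rw [← intervalIntegral.integral_of_le hpq, integral_one_div
    (by
      rw [Set.uIcc_of_le hpq]
      intro h
      exact absurd h.1 (not_le.mpr hp)),
    Real.log_div (ne_of_gt (lt_of_lt_of_le hp hpq)) (ne_of_gt hp)]

theorem integral_diff_lower_bound (u : ℝ) (hu : u ∈ Set.Ioo (0:ℝ) (1/2))
    (f : ℝ → ℝ) (hmono : StrictMonoOn f (Set.Ioc (0:ℝ) 1))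
    (hint : Integrable f fareyMeasure) :
    (∫ x in Set.Icc u 1, f x ∂fareyMeasure)
      - ∫ x in farey ⁻¹' (Set.Icc u 1) ∩ Set.Icc (0:ℝ) 1, f x ∂fareyMeasure
      ≥ (f (1 / (1 + u)) - f u) * Real.log (1 + u)
    ∧ (f (1 / (1 + u)) - f u) * Real.log (1 + u) > 0 := by
  obtain ⟨hu0, hu2⟩ := hu
  set a : ℝ := u / (1 + u) with ha
  set b : ℝ := 1 / (1 + u) with hb
  have h1u : (0:ℝ) < 1 + u := by linarith
  have ha0 : 0 < a := by positivity
  have hau : a < u := by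
    rw [ha, div_lt_iff₀ h1u]; nlinarith
  have hub : u < b := by
    rw [hb, lt_div_iff₀ h1u]; nlinarith
  have hb1 : b < 1 := by
    rw [hb, div_lt_one h1u]; linarith
  have hbIoc : b ∈ Set.Ioc (0:ℝ) 1 := ⟨by positivity, le_of_lt hb1⟩
  have huIoc : u ∈ Set.Ioc (0:ℝ) 1 := ⟨hu0, by linarith⟩
  -- preimage identification
  have hpre : farey ⁻¹' (Set.Icc u 1) ∩ Set.Icc (0:ℝ) 1 = Set.Icc a b := by
    ext x
    simp only [Set.mem_inter_iff, Set.mem_preimage, Set.mem_Icc, farey]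
    constructor
    · rintro ⟨⟨h1, h2⟩, h3, h4⟩
      by_cases hx : x ≤ 1/2
      · rw [if_pos hx] at h1 h2
        have hx1 : 0 < 1 - x := by linarith
        have h1' : u * (1 - x) ≤ x := (le_div_iff₀ hx1).mp h1
        constructor
        · rw [ha, div_le_iff₀ h1u]; nlinarith
        · rw [hb, le_div_iff₀ h1u]; nlinarith
      · rw [if_neg hx] at h1 h2
        push_neg at hx
        have hx0 : 0 < x := by linarith
        have h1' : u * x ≤ 1 - x := (le_div_iff₀ hx0).mp h1
        constructor
        · rw [ha, div_le_iff₀ h1u]; nlinarith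
        · rw [hb, le_div_iff₀ h1u]; nlinarith
    · rintro ⟨h1, h2⟩
      have hxa : u ≤ x * (1 + u) := by
        rw [ha, div_le_iff₀ h1u] at h1; linarith
      have hxb : x * (1 + u) ≤ 1 := by
        rw [hb, le_div_iff₀ h1u] at h2; linarith
      have hx0 : 0 < x := lt_of_lt_of_le ha0 h1
      refine ⟨?_, le_of_lt hx0, le_of_lt (lt_of_le_of_lt h2 hb1)⟩
      by_cases hx : x ≤ 1/2
      · rw [if_pos hx]
        have hx1 : 0 < 1 - x := by linarith
        constructor
        · rw [le_div_iff₀ hx1]; nlinarith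
        · rw [div_le_one hx1]; linarith
      · push_neg at hx
        rw [if_neg (not_le.mpr hx)]
        constructor
        · rw [le_div_iff₀ hx0]; nlinarith
        · rw [div_le_one hx0]; linarith
  -- a.e. replace closed intervals by Ioc
  have hsing : ∀ y : ℝ, fareyMeasure {y} = 0 := fun y => fm_null (measure_singleton y)
  have hIcc_Ioc : ∀ p q : ℝ, (Set.Icc p q : Set ℝ) =ᵐ[fareyMeasure] Set.Ioc p q := by
    intro p q
    rw [MeasureTheory.ae_eq_set]
    constructor
    · refine measure_mono_null (fun x hx => ?_) (hsing p)
      obtain ⟨⟨hx1, hx2⟩, hx3⟩ := hx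
      simp only [Set.mem_Ioc, not_and, not_le] at hx3
      have : x = p := by
        by_contra hne
        exact absurd hx2 (not_le.mpr (hx3 (lt_of_le_of_ne hx1 (Ne.symm hne))))
      simp [this]
    · rw [Set.diff_eq_empty.mpr Set.Ioc_subset_Icc_self]
      exact measure_empty
  have hI1 : (∫ x in Set.Icc u 1, f x ∂fareyMeasure) = ∫ x in Set.Ioc u 1, f x ∂fareyMeasure :=
    setIntegral_congr_set (hIcc_Ioc u 1)
  have hI2 : (∫ x in Set.Icc a b, f x ∂fareyMeasure) = ∫ x in Set.Ioc a b, f x ∂fareyMeasure :=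
    setIntegral_congr_set (hIcc_Ioc a b)
  -- split
  have hfInt : ∀ s : Set ℝ, IntegrableOn f s fareyMeasure := fun s => hint.integrableOn
  have hsplit1 : (∫ x in Set.Ioc u 1, f x ∂fareyMeasure)
      = (∫ x in Set.Ioc u b, f x ∂fareyMeasure) + ∫ x in Set.Ioc b 1, f x ∂fareyMeasure := by
    rw [← setIntegral_union (Set.Ioc_disjoint_Ioc_of_le le_rfl) measurableSet_Ioc (hfInt _) (hfInt _),
      Set.Ioc_union_Ioc_eq_Ioc (le_of_lt hub) (le_of_lt hb1)]
  have hsplit2 : (∫ x in Set.Ioc a b, f x ∂fareyMeasure)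
      = (∫ x in Set.Ioc a u, f x ∂fareyMeasure) + ∫ x in Set.Ioc u b, f x ∂fareyMeasure := by
    rw [← setIntegral_union (Set.Ioc_disjoint_Ioc_of_le le_rfl) measurableSet_Ioc (hfInt _) (hfInt _),
      Set.Ioc_union_Ioc_eq_Ioc (le_of_lt hau) (le_of_lt hub)]
  -- measures of the two pieces
  have hL0 : (0:ℝ) ≤ Real.log (1 + u) := Real.log_nonneg (by linarith)
  have hm1 : fareyMeasure (Set.Ioc b 1) = ENNReal.ofReal (Real.log (1 + u)) := by
    rw [fm_Ioc hbIoc.1 (le_of_lt hb1) le_rfl, Real.log_one, hb, one_div, Real.log_inv]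
    ring_nf
  have hm2 : fareyMeasure (Set.Ioc a u) = ENNReal.ofReal (Real.log (1 + u)) := by
    rw [fm_Ioc ha0 (le_of_lt hau) (by linarith : u ≤ 1), ha,
      Real.log_div (ne_of_gt hu0) (ne_of_gt h1u)]
    ring_nf
  -- lower bound on the right piece
  have hbound1 : f b * Real.log (1 + u) ≤ ∫ x in Set.Ioc b 1, f x ∂fareyMeasure := by
    have hconst : (∫ _ in Set.Ioc b 1, f b ∂fareyMeasure) = f b * Real.log (1 + u) := by
      rw [setIntegral_const, measureReal_def, hm1, ENNReal.toReal_ofReal hL0, smul_eq_mul, mul_comm]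
    rw [← hconst]
    refine setIntegral_mono_on ?_ (hfInt _) measurableSet_Ioc ?_
    · refine integrableOn_const ?_
      rw [hm1]; exact ENNReal.ofReal_ne_top
    · intro x hx
      exact hmono.monotoneOn hbIoc ⟨lt_trans hbIoc.1 hx.1, hx.2⟩ (le_of_lt hx.1)
  -- upper bound on the left piece
  have hbound2 : (∫ x in Set.Ioc a u, f x ∂fareyMeasure) ≤ f u * Real.log (1 + u) := by
    have hconst : (∫ _ in Set.Ioc a u, f u ∂fareyMeasure) = f u * Real.log (1 + u) := by
      rw [setIntegral_const, measureReal_def, hm2, ENNReal.toReal_ofReal hL0, smul_eq_mul, mul_comm]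
    rw [← hconst]
    refine setIntegral_mono_on (hfInt _) ?_ measurableSet_Ioc ?_
    · refine integrableOn_const ?_
      rw [hm2]; exact ENNReal.ofReal_ne_top
    · intro x hx
      exact hmono.monotoneOn ⟨lt_trans ha0 hx.1, le_trans hx.2 huIoc.2⟩ huIoc hx.2
  have hfub : f u < f b := hmono huIoc hbIoc hub
  constructor
  · rw [hpre, hI1, hI2, hsplit1, hsplit2]
    have : (∫ x in Set.Ioc b 1, f x ∂fareyMeasure) - ∫ x in Set.Ioc a u, f x ∂fareyMeasure
        ≥ f b * Real.log (1 + u) - f u * Real.log (1 + u) := by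
      linarith
    calc (∫ x in Set.Ioc u b, f x ∂fareyMeasure) + (∫ x in Set.Ioc b 1, f x ∂fareyMeasure)
          - ((∫ x in Set.Ioc a u, f x ∂fareyMeasure) + ∫ x in Set.Ioc u b, f x ∂fareyMeasure)
        = (∫ x in Set.Ioc b 1, f x ∂fareyMeasure)
          - ∫ x in Set.Ioc a u, f x ∂fareyMeasure := by ring
      _ ≥ f b * Real.log (1 + u) - f u * Real.log (1 + u) := this
      _ = (f b - f u) * Real.log (1 + u) := by ring
  · have hLpos : 0 < Real.log (1 + u) := Real.log_pos (by linarith)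
    exact mul_pos (by linarith) hLpos
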